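/- Let $\Omega$ be a finite sample space, let $p_1,\dots,p_t$ and $q_1,\dots,q_l$ be probability distributions on $\Omega$, and let $\epsilon_{ij}\in[0,1]$ for $i\in[t]$, $j\in[l]$. Then there exists a function $f:\Omega\to[0,1]$ such that (1) for all $i\in[t]$, $\sum_{\omega} p_i(\omega) f(\omega) \ge 1 - \sum_{j=1}^l \epsilon_{ij}$, and (2) for all $j\in[l]$, $\sum_{\omega} q_j(\omega) f(\omega) \le \sum_{i=1}^t 2^{-D_H^{\epsilon_{ij}}(p_i\|q_j)}$. -/
import Mathlib


open Finset

/-- Classical hypothesis testing relative entropy `D_H^ε(p‖q)` on a finite sample space. -/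
noncomputable def DHc {Ω : Type*} [Fintype Ω] (p q : Ω → ℝ) (ε : ℝ) : ℝ :=
  sSup {x : ℝ | ∃ f : Ω → ℝ, (∀ ω, 0 ≤ f ω ∧ f ω ≤ 1) ∧
    1 - ε ≤ ∑ ω, f ω * p ω ∧ x = -Real.logb 2 (∑ ω, f ω * q ω)}

lemma exists_opt {Ω : Type*} [Fintype Ω] (p q : Ω → ℝ) (ε : ℝ)
    (hp1 : ∑ ω, p ω = 1)
    (hq0 : ∀ ω, 0 ≤ q ω) (hq1 : ∑ ω, q ω = 1) (hε : 0 ≤ ε) :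
    ∃ f : Ω → ℝ, (∀ ω, 0 ≤ f ω ∧ f ω ≤ 1) ∧ 1 - ε ≤ ∑ ω, f ω * p ω ∧
      ∑ ω, f ω * q ω ≤ (2:ℝ) ^ (-(DHc p q ε)) := by
  classical
  set K : Set (Ω → ℝ) := {f | (∀ ω, f ω ∈ Set.Icc (0:ℝ) 1) ∧ 1 - ε ≤ ∑ ω, f ω * p ω} with hK
  have hcont : ∀ r : Ω → ℝ, Continuous (fun f : Ω → ℝ => ∑ ω, f ω * r ω) := by
    intro r
    exact continuous_finset_sum _ fun ω _ => (continuous_apply ω).mul continuous_const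
  have hP : IsClosed {f : Ω → ℝ | ∀ ω, f ω ∈ Set.Icc (0:ℝ) 1} := by
    have : {f : Ω → ℝ | ∀ ω, f ω ∈ Set.Icc (0:ℝ) 1}
        = ⋂ ω, (fun f : Ω → ℝ => f ω) ⁻¹' Set.Icc 0 1 := by
      ext f; simp
    rw [this]
    exact isClosed_iInter fun ω => isClosed_Icc.preimage (continuous_apply ω)
  have hKclosed : IsClosed K := hP.inter (isClosed_le continuous_const (hcont p))
  have hKc : IsCompact K := by
    have h1 : IsCompact (Set.univ.pi fun _ : Ω => Set.Icc (0:ℝ) 1) :=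
      isCompact_univ_pi fun _ => isCompact_Icc
    exact h1.of_isClosed_subset hKclosed (fun f hf => by
      rw [Set.mem_univ_pi]; exact fun ω => hf.1 ω)
  have hone : (fun _ : Ω => (1:ℝ)) ∈ K := by
    constructor
    · intro ω; exact ⟨zero_le_one, le_refl 1⟩
    · simp only [one_mul]
      rw [hp1]; linarith
  obtain ⟨f₀, hf₀K, hmin⟩ := hKc.exists_isMinOn ⟨_, hone⟩ (hcont q).continuousOn
  refine ⟨f₀, fun ω => ⟨(hf₀K.1 ω).1, (hf₀K.1 ω).2⟩, hf₀K.2, ?_⟩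
  set m := ∑ ω, f₀ ω * q ω with hm
  have hm0 : 0 ≤ m := Finset.sum_nonneg fun ω _ => mul_nonneg (hf₀K.1 ω).1 (hq0 ω)
  rcases eq_or_lt_of_le hm0 with h0 | hpos
  · calc m = 0 := h0.symm
      _ ≤ (2:ℝ) ^ (-(DHc p q ε)) := (Real.rpow_pos_of_pos two_pos _).le
  · -- m > 0 : show DHc ≤ -logb 2 m
    have hm1 : m ≤ 1 := by
      calc m ≤ ∑ ω, q ω := Finset.sum_le_sum fun ω _ => by
              nlinarith [(hf₀K.1 ω).1, (hf₀K.1 ω).2, hq0 ω]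
        _ = 1 := hq1
    have hlogb : Real.logb 2 m ≤ 0 := Real.logb_nonpos one_lt_two hm0 hm1
    have hD : DHc p q ε ≤ -Real.logb 2 m := by
      apply Real.sSup_le
      · rintro x ⟨f, hf01, hfp, rfl⟩
        have hfK : f ∈ K := ⟨fun ω => ⟨(hf01 ω).1, (hf01 ω).2⟩, hfp⟩
        have hge : m ≤ ∑ ω, f ω * q ω := hmin hfK
        have := Real.logb_le_logb_of_le (b := 2) one_lt_two hpos hge
        linarith
      · linarith
    have : Real.logb 2 m ≤ -(DHc p q ε) := by linarith
    calc m = (2:ℝ) ^ (Real.logb 2 m) := (Real.rpow_logb two_pos (by norm_num) hpos).symm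
      _ ≤ (2:ℝ) ^ (-(DHc p q ε)) := Real.rpow_le_rpow_left_iff one_lt_two |>.mpr this

/-- Classical joint typicality lemma. -/
theorem stmt0 {Ω : Type*} [Fintype Ω] (t l : ℕ)
    (p : Fin t → Ω → ℝ) (hp : ∀ i, (∀ ω, 0 ≤ p i ω) ∧ ∑ ω, p i ω = 1)
    (q : Fin l → Ω → ℝ) (hq : ∀ j, (∀ ω, 0 ≤ q j ω) ∧ ∑ ω, q j ω = 1)
    (ε : Fin t → Fin l → ℝ) (hε : ∀ i j, 0 ≤ ε i j ∧ ε i j ≤ 1) :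
    ∃ f : Ω → ℝ, (∀ ω, 0 ≤ f ω ∧ f ω ≤ 1) ∧
      (∀ i, 1 - ∑ j, ε i j ≤ ∑ ω, p i ω * f ω) ∧
      (∀ j, ∑ ω, q j ω * f ω ≤ ∑ i, (2 : ℝ) ^ (-(DHc (p i) (q j) (ε i j)))) := by
  classical
  have hFc := fun (i : Fin t) (j : Fin l) =>
    exists_opt (p i) (q j) (ε i j) (hp i).2 (hq j).1 (hq j).2 (hε i j).1
  choose F hF01 hFp hFq using hFc
  set g : Fin t → Ω → ℝ := fun i ω => max 0 (1 - ∑ j, (1 - F i j ω)) with hg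
  have hg0 : ∀ i ω, 0 ≤ g i ω := fun i ω => le_max_left _ _
  have hg1 : ∀ i ω, g i ω ≤ 1 := by
    intro i ω
    apply max_le zero_le_one
    have : 0 ≤ ∑ j, (1 - F i j ω) :=
      Finset.sum_nonneg fun j _ => by linarith [(hF01 i j ω).2]
    linarith
  have hgF : ∀ i j ω, g i ω ≤ F i j ω := by
    intro i j ω
    apply max_le (hF01 i j ω).1
    have : (1 : ℝ) - F i j ω ≤ ∑ j', (1 - F i j' ω) :=
      Finset.single_le_sum (f := fun j' => 1 - F i j' ω)
        (fun j' _ => sub_nonneg.mpr (hF01 i j' ω).2) (Finset.mem_univ j)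
    linarith
  refine ⟨fun ω => min 1 (∑ i, g i ω), ?_, ?_, ?_⟩
  · intro ω
    exact ⟨le_min zero_le_one (Finset.sum_nonneg fun i _ => hg0 i ω), min_le_left _ _⟩
  · intro i
    have step1 : ∑ ω, p i ω * g i ω ≤ ∑ ω, p i ω * min 1 (∑ i', g i' ω) := by
      apply Finset.sum_le_sum
      intro ω _
      apply mul_le_mul_of_nonneg_left _ ((hp i).1 ω)
      exact le_min (hg1 i ω) (Finset.single_le_sum (f := fun i' => g i' ω)
        (fun i' _ => hg0 i' ω) (Finset.mem_univ i))
    have step2 : ∑ ω, p i ω * (1 - ∑ j, (1 - F i j ω)) ≤ ∑ ω, p i ω * g i ω :=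
      Finset.sum_le_sum fun ω _ =>
        mul_le_mul_of_nonneg_left (le_max_right _ _) ((hp i).1 ω)
    have expand : ∑ ω, p i ω * (1 - ∑ j, (1 - F i j ω))
        = 1 - ∑ j, (1 - ∑ ω, p i ω * F i j ω) := by
      have hsum := (hp i).2
      simp only [mul_sub, mul_one, Finset.mul_sum, Finset.sum_sub_distrib, hsum]
      rw [Finset.sum_comm]
      simp [Finset.sum_sub_distrib, hsum]
      exact Finset.sum_comm ..

    have step3 : 1 - ∑ j, ε i j ≤ 1 - ∑ j, (1 - ∑ ω, p i ω * F i j ω) := by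
      have : ∑ j, (1 - ∑ ω, p i ω * F i j ω) ≤ ∑ j, ε i j := by
        apply Finset.sum_le_sum
        intro j _
        have := hFp i j
        have hc : ∑ ω, F i j ω * p i ω = ∑ ω, p i ω * F i j ω := by
          apply Finset.sum_congr rfl; intro ω _; ring
        linarith [hc ▸ this]
      linarith
    linarith [expand ▸ step3]
  · intro j
    have step1 : ∑ ω, q j ω * min 1 (∑ i, g i ω) ≤ ∑ ω, q j ω * ∑ i, g i ω :=
      Finset.sum_le_sum fun ω _ =>
        mul_le_mul_of_nonneg_left (min_le_right _ _) ((hq j).1 ω)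
    have step2 : ∑ ω, q j ω * ∑ i, g i ω = ∑ i, ∑ ω, q j ω * g i ω := by
      rw [Finset.sum_comm]
      apply Finset.sum_congr rfl
      intro ω _
      rw [Finset.mul_sum]
    have step3 : ∀ i, ∑ ω, q j ω * g i ω ≤ (2:ℝ) ^ (-(DHc (p i) (q j) (ε i j))) := by
      intro i
      have h1 : ∑ ω, q j ω * g i ω ≤ ∑ ω, F i j ω * q j ω := by
        apply Finset.sum_le_sum
        intro ω _
        calc q j ω * g i ω ≤ q j ω * F i j ω :=
              mul_le_mul_of_nonneg_left (hgF i j ω) ((hq j).1 ω)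
          _ = F i j ω * q j ω := by ring
      linarith [hFq i j]
    calc ∑ ω, q j ω * min 1 (∑ i, g i ω) ≤ ∑ i, ∑ ω, q j ω * g i ω := by
          rw [← step2]; exact step1
      _ ≤ ∑ i, (2:ℝ) ^ (-(DHc (p i) (q j) (ε i j))) :=
          Finset.sum_le_sum fun i _ => step3 i
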